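/- Let G be a finite simple graph of order n with minimum degree δ(G) and maximum degree Δ(G), and let π be a gc-partition of G. If A ∈ π, then the number of parts of π that form a global coalition with A is at most max{ Δ(G)+1, min{ n − |A|, n − δ(G) } }. -/
import Mathlib


open SimpleGraph Finset

variable {V : Type*} [Fintype V] [DecidableEq V]

/-- `S` is a dominating set of the graph `G`. -/
def IsDomSet (G : SimpleGraph V) (S : Finset V) : Prop :=
  ∀ v : V, v ∈ S ∨ ∃ u ∈ S, G.Adj u v

/-- `S` is a global dominating set of `G`: it dominates both `G` and its complement. -/
def IsGlobalDomSet (G : SimpleGraph V) (S : Finset V) : Prop :=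
  IsDomSet G S ∧ IsDomSet Gᶜ S

/-- Disjoint sets `A` and `B` form a global coalition in `G`. -/
def IsGlobalCoalition (G : SimpleGraph V) (A B : Finset V) : Prop :=
  Disjoint A B ∧ ¬ IsGlobalDomSet G A ∧ ¬ IsGlobalDomSet G B ∧ IsGlobalDomSet G (A ∪ B)

/-- `π` is a global coalition partition (gc-partition) of `G`. -/
def IsGCPartition (G : SimpleGraph V) (π : Finpartition (Finset.univ : Finset V)) : Prop :=
  ∀ A ∈ π.parts, ¬ IsGlobalDomSet G A ∧ ∃ B ∈ π.parts, B ≠ A ∧ IsGlobalCoalition G A B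

/-- The global coalition number `GC(G)`: the maximum number of parts in a gc-partition of `G`. -/
noncomputable def globalCoalitionNumber (G : SimpleGraph V) : ℕ :=
  sSup {n | ∃ π : Finpartition (Finset.univ : Finset V), IsGCPartition G π ∧ π.parts.card = n}

theorem gc_partner_bound (G : SimpleGraph V) [DecidableRel G.Adj]
    (π : Finpartition (Finset.univ : Finset V)) (hπ : IsGCPartition G π)
    (A : Finset V) (hA : A ∈ π.parts) :
    {B | B ∈ π.parts ∧ IsGlobalCoalition G A B}.ncard ≤
      max (G.maxDegree + 1)
        (min (Fintype.card V - A.card) (Fintype.card V - G.minDegree)) := by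
  classical
  have hset : {B | B ∈ π.parts ∧ IsGlobalCoalition G A B} =
      ↑(π.parts.filter (fun B => IsGlobalCoalition G A B)) := by
    ext B; simp
  rw [hset, Set.ncard_coe_finset]
  set P := π.parts.filter (fun B => IsGlobalCoalition G A B) with hP
  have key : ∀ W : Finset V, (∀ B ∈ P, (B ∩ W).Nonempty) → P.card ≤ W.card := by
    intro W hW
    rcases isEmpty_or_nonempty V with hV | hV
    · have hPe : P = ∅ := by
        refine Finset.eq_empty_of_forall_notMem fun B hB => ?_
        obtain ⟨x, hx⟩ := hW B hB
        exact hV.elim x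
      simp [hPe]
    have h : ∀ B : Finset V, ∃ x, B ∈ P → x ∈ B ∧ x ∈ W := by
      intro B
      by_cases hB : B ∈ P
      · obtain ⟨x, hx⟩ := hW B hB
        exact ⟨x, fun _ => ⟨(mem_inter.mp hx).1, (mem_inter.mp hx).2⟩⟩
      · exact ⟨Classical.arbitrary V, fun h => absurd h hB⟩
    choose f hf using h
    apply Finset.card_le_card_of_injOn f (fun B hB => (hf B hB).2)
    intro B₁ h₁ B₂ h₂ hfe
    by_contra hne
    have hd := π.disjoint (mem_filter.mp h₁).1 (mem_filter.mp h₂).1 hne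
    exact (Finset.disjoint_left.mp hd) (hf B₁ h₁).1 (hfe ▸ (hf B₂ h₂).1)
  have hAn : ¬ IsGlobalDomSet G A := (hπ A hA).1
  rw [IsGlobalDomSet, not_and_or] at hAn
  rcases hAn with hAn | hAn
  · -- A does not dominate G
    simp only [IsDomSet, not_forall, not_or, not_exists] at hAn
    obtain ⟨v, hvA, hvN⟩ := hAn
    push_neg at hvN
    refine le_trans (le_trans (key (insert v (G.neighborFinset v)) ?_) ?_)
      (le_max_left _ _)
    · intro B hB
      have hc : IsGlobalCoalition G A B := (mem_filter.mp hB).2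
      rcases hc.2.2.2.1 v with hv | ⟨u, huAB, hadj⟩
      · rcases mem_union.mp hv with h | h
        · exact absurd h hvA
        · exact ⟨v, mem_inter.mpr ⟨h, mem_insert_self _ _⟩⟩
      · rcases mem_union.mp huAB with h | h
        · exact absurd hadj (hvN u h)
        · exact ⟨u, mem_inter.mpr ⟨h,
            mem_insert_of_mem ((G.mem_neighborFinset v u).mpr hadj.symm)⟩⟩
    · calc (insert v (G.neighborFinset v)).card ≤ (G.neighborFinset v).card + 1 :=
            Finset.card_insert_le _ _
        _ = G.degree v + 1 := by rw [G.card_neighborFinset_eq_degree]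
        _ ≤ G.maxDegree + 1 := by
            exact Nat.add_le_add_right (G.degree_le_maxDegree v) 1
  · -- A does not dominate Gᶜ
    simp only [IsDomSet, not_forall, not_or, not_exists] at hAn
    obtain ⟨v, hvA, hvN⟩ := hAn
    push_neg at hvN
    have hAdj : ∀ u ∈ A, G.Adj u v := by
      intro u hu
      have := hvN u hu
      rw [SimpleGraph.compl_adj] at this
      rcases not_and_or.mp this with h | h
      · exact absurd ((not_not.mp h) ▸ hu) hvA
      · exact not_not.mp h
    have hAsub : A ⊆ G.neighborFinset v := by
      intro u hu
      exact (G.mem_neighborFinset v u).mpr (hAdj u hu).symm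
    set W : Finset V := Finset.univ \ G.neighborFinset v with hW
    have hWcard : W.card = Fintype.card V - G.degree v := by
      rw [hW, card_sdiff_of_subset (subset_univ _), card_univ, G.card_neighborFinset_eq_degree]
    have hmem : ∀ B ∈ P, (B ∩ W).Nonempty := by
      intro B hB
      have hc : IsGlobalCoalition G A B := (mem_filter.mp hB).2
      rcases hc.2.2.2.2 v with hv | ⟨u, huAB, hadj⟩
      · rcases mem_union.mp hv with h | h
        · exact absurd h hvA
        · refine ⟨v, mem_inter.mpr ⟨h, mem_sdiff.mpr ⟨mem_univ _, ?_⟩⟩⟩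
          simp [G.mem_neighborFinset]
      · rcases mem_union.mp huAB with h | h
        · exact absurd hadj (hvN u h)
        · refine ⟨u, mem_inter.mpr ⟨h, mem_sdiff.mpr ⟨mem_univ _, ?_⟩⟩⟩
          rw [G.mem_neighborFinset]
          rw [SimpleGraph.compl_adj] at hadj
          exact fun hvu => hadj.2 hvu.symm
    refine le_trans (key W hmem) (le_trans ?_ (le_max_right _ _))
    rw [hWcard]
    refine le_min ?_ ?_
    · exact Nat.sub_le_sub_left (le_trans (Finset.card_le_card hAsub)
        (le_of_eq (G.card_neighborFinset_eq_degree v))) _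
    · exact Nat.sub_le_sub_left (G.minDegree_le_degree v) _
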